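/- Suppose Assumption (S1) holds with q = 1 and some 0 < α ≤ 1. Then (1/n) Σ_{t=1}^n X_{t,n} converges in L^1 to ∫_0^1 E X̃_0(u) du as n → ∞. (By (S1), u ↦ E X̃_0(u) is Hölder continuous, so the integral is well defined.) -/

import Mathlib

open MeasureTheory Filter Set

noncomputable section

open scoped ENNReal Topology
set_option linter.unusedSectionVars false
set_option synthInstance.maxHeartbeats 1000000
set_option maxHeartbeats 1000000

/-- The two-sided shift on `ℤ → ℝ`. -/
def shiftZ : (ℤ → ℝ) → (ℤ → ℝ) := fun x t => x (t + 1)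

/-- A real-valued process `(X_t)_{t ∈ ℤ}` is stationary and ergodic: the law of the path
on `ℝ^ℤ` is shift invariant and the shift is ergodic for it. -/
def StatErg {Ω : Type*} [MeasurableSpace Ω] (μ : Measure Ω) (X : ℤ → Ω → ℝ) : Prop :=
  Ergodic shiftZ (Measure.map (fun ω t => X t ω) μ)


lemma measurable_shiftZ : Measurable shiftZ :=
  measurable_pi_lambda _ fun t => measurable_pi_apply (t + 1)

lemma shiftZ_iterate (k : ℕ) (x : ℤ → ℝ) (s : ℤ) : shiftZ^[k] x s = x (s + k) := by
  induction k generalizing x s with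
  | zero => simp
  | succ k ih =>
      rw [Function.iterate_succ_apply, ih (shiftZ x) s]
      show x (s + k + 1) = x (s + (k + 1 : ℕ))
      congr 1; push_cast; ring

lemma sum_blocks {M : Type*} [AddCommMonoid M] (f : ℕ → M) (a : ℕ → ℕ) (ha : Monotone a) (K : ℕ) :
    ∑ j ∈ Finset.range K, ∑ t ∈ Finset.Ioc (a j) (a (j + 1)), f t
      = ∑ t ∈ Finset.Ioc (a 0) (a K), f t := by
  induction K with
  | zero => simp
  | succ K ih =>
      rw [Finset.sum_range_succ, ih,
        Finset.sum_Ioc_consecutive _ (ha (Nat.zero_le K)) (ha (Nat.le_succ K))]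

section Koopman

variable {Z : Type*} [MeasurableSpace Z] {ν : Measure Z} [IsProbabilityMeasure ν] {T : Z → Z}

/-- The Koopman operator on `L²`. -/
def koopman (hT : MeasurePreserving T ν ν) : Lp ℝ 2 ν →L[ℝ] Lp ℝ 2 ν :=
  LinearMap.mkContinuous
    { toFun := Lp.compMeasurePreserving T hT
      map_add' := fun f g => map_add _ f g
      map_smul' := fun c f => by
        apply Lp.ext
        have h1 := Lp.coeFn_compMeasurePreserving (c • f) hT
        have h2 := Lp.coeFn_compMeasurePreserving f hT
        have h3 := hT.quasiMeasurePreserving.ae_eq_comp (Lp.coeFn_smul c f)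
        have h4 := Lp.coeFn_smul c (Lp.compMeasurePreserving T hT f)
        filter_upwards [h1, h3, h4, h2] with z hz1 hz3 hz4 hz2
        show ((Lp.compMeasurePreserving T hT) (c • f)) z
            = (c • (Lp.compMeasurePreserving T hT f)) z
        rw [hz1, hz4]
        show (⇑(c • f) ∘ T) z = c • ((Lp.compMeasurePreserving T hT f) z)
        rw [hz3]
        simp only [Function.comp_apply, Pi.smul_apply]
        have : ((Lp.compMeasurePreserving T hT f)) z = (⇑f ∘ T) z := hz2
        rw [this]
        rfl }
    1
    (fun f => by
      simp only [LinearMap.coe_mk, AddHom.coe_mk, one_mul]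
      exact le_of_eq (Lp.norm_compMeasurePreserving f hT))

lemma koopman_norm_le (hT : MeasurePreserving T ν ν) : ‖koopman hT‖ ≤ 1 :=
  LinearMap.mkContinuous_norm_le _ zero_le_one _

lemma koopman_coeFn (hT : MeasurePreserving T ν ν) (f : Lp ℝ 2 ν) :
    ⇑(koopman hT f) =ᵐ[ν] ⇑f ∘ T :=
  Lp.coeFn_compMeasurePreserving f hT

lemma koopman_iterate_coeFn (hT : MeasurePreserving T ν ν) (f : Lp ℝ 2 ν) (g : Z → ℝ)
    (hfg : ⇑f =ᵐ[ν] g) (k : ℕ) : ⇑((koopman hT)^[k] f) =ᵐ[ν] g ∘ T^[k] := by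
  induction k with
  | zero => simpa using hfg
  | succ k ih =>
      rw [Function.iterate_succ_apply']
      refine (koopman_coeFn hT _).trans ?_
      refine (hT.quasiMeasurePreserving.ae_eq_comp ih).trans ?_
      rw [Function.iterate_succ]
      rfl

end Koopman

section L2

variable {Z : Type*} [MeasurableSpace Z] {ν : Measure Z} [IsProbabilityMeasure ν] {T : Z → Z}

lemma Lp.coeFn_finset_sum {E : Type*} [NormedAddCommGroup E] {p : ℝ≥0∞} {ι : Type*}
    (s : Finset ι) (f : ι → Lp E p ν) :
    ⇑(∑ i ∈ s, f i) =ᵐ[ν] fun x => ∑ i ∈ s, f i x := by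
  classical
  induction s using Finset.induction_on with
  | empty => exact Lp.coeFn_zero E p ν
  | insert _ _ hnotmem ih =>
      rename_i a s
      rw [Finset.sum_insert hnotmem]
      refine (Lp.coeFn_add _ _).trans ?_
      filter_upwards [ih] with x hx
      show (⇑(f a) + ⇑(∑ i ∈ s, f i)) x = _
      rw [Pi.add_apply, hx]
      rw [Finset.sum_insert hnotmem]

lemma tendsto_eLpNorm_two_ergodic (hT : Ergodic T ν) {g : Z → ℝ} (hg : MemLp g 2 ν) :
    Tendsto (fun N : ℕ => eLpNorm
      (fun x => (N : ℝ)⁻¹ * ∑ t ∈ Finset.range N, g (T^[t] x) - ∫ y, g y ∂ν) 2 ν)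
      atTop (𝓝 0) := by
  set U := koopman hT.toMeasurePreserving with hU
  set G := hg.toLp g with hG
  set c : ℝ := ∫ y, g y ∂ν with hc
  set v : Lp ℝ 2 ν := (memLp_const c).toLp (fun _ => c) with hv
  have hvcoe : ⇑v =ᵐ[ν] fun _ => c := (memLp_const c).coeFn_toLp
  have hGcoe : ⇑G =ᵐ[ν] g := hg.coeFn_toLp
  have hint2 : ∀ w : Lp ℝ 2 ν, Integrable (⇑w) ν := fun w =>
    memLp_one_iff_integrable.mp ((Lp.memLp w).mono_exponent one_le_two)
  -- the constant v is a fixed point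
  have hvm : v ∈ U.eqLocus (1 : Lp ℝ 2 ν →L[ℝ] Lp ℝ 2 ν) := by
    show U v = v
    apply Lp.ext
    refine (koopman_coeFn _ v).trans ?_
    refine (hT.toMeasurePreserving.quasiMeasurePreserving.ae_eq_comp hvcoe).trans ?_
    exact hvcoe.symm
  -- inner products with fixed points vanish
  have hvo : ∀ w ∈ U.eqLocus (1 : Lp ℝ 2 ν →L[ℝ] Lp ℝ 2 ν),
      (inner ℝ (G - v) w : ℝ) = 0 := by
    intro w hw
    have hUw : U w = w := hw
    have hwT : ⇑w ∘ T =ᵐ[ν] ⇑w := by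
      refine ((koopman_coeFn hT.toMeasurePreserving w).symm.trans ?_)
      rw [hUw]
    obtain ⟨d, hd⟩ := hT.ae_eq_const_of_ae_eq_comp₀
      ((Lp.aestronglyMeasurable w).aemeasurable.nullMeasurable) hwT
    have hsub : ⇑(G - v) =ᵐ[ν] ⇑G - ⇑v := Lp.coeFn_sub G v
    have hinner : (inner ℝ (G - v) w : ℝ) = ∫ a, (G - v) a * w a ∂ν := by
      rw [L2.inner_def]
      simp [RCLike.inner_apply]
      exact integral_congr_ae (Filter.Eventually.of_forall fun a => mul_comm _ _)
    rw [hinner]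
    have h1 : ∫ a, (G - v) a * w a ∂ν = ∫ a, (G - v) a * d ∂ν := by
      refine integral_congr_ae ?_
      filter_upwards [hd] with a ha
      rw [ha]; rfl
    rw [h1, integral_mul_const]
    have h2 : ∫ a, (G - v) a ∂ν = 0 := by
      have : ∫ a, (G - v) a ∂ν = ∫ a, (⇑G - ⇑v) a ∂ν := integral_congr_ae hsub
      rw [this]
      simp only [Pi.sub_apply]
      rw [integral_sub (hint2 G) (hint2 v)]
      have hg1 : ∫ a, G a ∂ν = c := by
        rw [integral_congr_ae hGcoe]
      have hv1 : ∫ a, v a ∂ν = c := by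
        rw [integral_congr_ae hvcoe]; simp
      simp [hg1, hv1]
    rw [h2, zero_mul]
  have hbA := ContinuousLinearMap.tendsto_birkhoffAverage_orthogonalProjection
    (𝕜 := ℝ) U (koopman_norm_le _) G
  rw [Submodule.coe_orthogonalProjectionOnto_apply,
    Submodule.eq_starProjection_of_mem_of_inner_eq_zero hvm hvo] at hbA
  have hnorm : Tendsto (fun N => ‖birkhoffAverage ℝ (⇑U) id N G - v‖) atTop (𝓝 0) :=
    tendsto_iff_norm_sub_tendsto_zero.mp hbA
  have key : ∀ N : ℕ, eLpNorm (fun x => (N : ℝ)⁻¹ * ∑ t ∈ Finset.range N, g (T^[t] x) - c) 2 ν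
      = ENNReal.ofReal ‖birkhoffAverage ℝ (⇑U) id N G - v‖ := by
    intro N
    have h1 : ⇑(birkhoffAverage ℝ (⇑U) id N G) =ᵐ[ν]
        (fun x => (N : ℝ)⁻¹ * ∑ t ∈ Finset.range N, g (T^[t] x)) := by
      have hS : birkhoffAverage ℝ (⇑U) id N G
          = (N : ℝ)⁻¹ • ∑ k ∈ Finset.range N, (⇑U)^[k] G := by
        simp [birkhoffAverage, birkhoffSum]
      rw [hS]
      have hall : ∀ᵐ x ∂ν, ∀ k : ℕ, ((⇑U)^[k] G) x = g (T^[k] x) :=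
        ae_all_iff.2 fun k => koopman_iterate_coeFn hT.toMeasurePreserving G g hGcoe k
      filter_upwards [Lp.coeFn_smul ((N : ℝ)⁻¹) (∑ k ∈ Finset.range N, (⇑U)^[k] G),
        Lp.coeFn_finset_sum (Finset.range N) (fun k => (⇑U)^[k] G), hall] with x hx hsx hallx
      rw [hx, Pi.smul_apply, hsx, smul_eq_mul]
      congr 1
      exact Finset.sum_congr rfl fun k _ => hallx k
    have hae : ⇑(birkhoffAverage ℝ (⇑U) id N G - v) =ᵐ[ν]
        fun x => (N : ℝ)⁻¹ * ∑ t ∈ Finset.range N, g (T^[t] x) - c := by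
      filter_upwards [Lp.coeFn_sub (birkhoffAverage ℝ (⇑U) id N G) v, h1, hvcoe]
        with x h h1x hvx
      rw [h, Pi.sub_apply, h1x, hvx]
    rw [eLpNorm_congr_ae hae.symm, Lp.norm_def,
      ENNReal.ofReal_toReal (Lp.eLpNorm_ne_top _)]
  simp only [key]
  simpa using ENNReal.tendsto_ofReal (a := 0) hnorm

end L2

section L1

variable {Z : Type*} [MeasurableSpace Z] {ν : Measure Z} [IsProbabilityMeasure ν] {T : Z → Z}

lemma sum_Icc_one {M : Type*} [AddCommMonoid M] (f : ℕ → M) (N : ℕ) :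
    ∑ t ∈ Finset.Icc 1 N, f t = ∑ t ∈ Finset.range N, f (t + 1) := by
  induction N with
  | zero => simp
  | succ N ih =>
      rw [Finset.sum_Icc_succ_top (Nat.one_le_iff_ne_zero.mpr (Nat.succ_ne_zero N)), ih,
        Finset.sum_range_succ]

lemma eLpNorm_avg_le (hT : MeasurePreserving T ν ν) {h : Z → ℝ} (hm : Measurable h) (N : ℕ) :
    eLpNorm (fun x => (N : ℝ)⁻¹ * ∑ t ∈ Finset.range N, h (T^[t] x)) 1 ν
      ≤ eLpNorm h 1 ν := by
  rcases Nat.eq_zero_or_pos N with hN | hN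
  · subst hN; simp
  have hfun : (fun x => (N : ℝ)⁻¹ * ∑ t ∈ Finset.range N, h (T^[t] x))
      = (N : ℝ)⁻¹ • (∑ t ∈ Finset.range N, fun x => h (T^[t] x)) := by
    funext x; simp [Finset.sum_apply]
  rw [hfun, eLpNorm_const_smul]
  have hsum : eLpNorm (∑ t ∈ Finset.range N, fun x => h (T^[t] x)) 1 ν
      ≤ ∑ t ∈ Finset.range N, eLpNorm (fun x => h (T^[t] x)) 1 ν :=
    eLpNorm_sum_le (fun i _ => ((hm.comp ((hT.iterate i).measurable)).aestronglyMeasurable)) le_rfl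
  have heach : ∀ t, eLpNorm (fun x => h (T^[t] x)) 1 ν = eLpNorm h 1 ν := fun t =>
    eLpNorm_comp_measurePreserving hm.aestronglyMeasurable (hT.iterate t)
  calc (‖(N : ℝ)⁻¹‖₊ : ℝ≥0∞) • eLpNorm (∑ t ∈ Finset.range N, fun x => h (T^[t] x)) 1 ν
      ≤ (‖(N : ℝ)⁻¹‖₊ : ℝ≥0∞) * ∑ t ∈ Finset.range N, eLpNorm (fun x => h (T^[t] x)) 1 ν := by
        rw [smul_eq_mul]; exact mul_le_mul_right hsum _
    _ = (‖(N : ℝ)⁻¹‖₊ : ℝ≥0∞) * (N * eLpNorm h 1 ν) := by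
        rw [Finset.sum_congr rfl fun t _ => heach t, Finset.sum_const, Finset.card_range,
          nsmul_eq_mul]
    _ = eLpNorm h 1 ν := by
        have h1 : (‖(N : ℝ)⁻¹‖₊ : ℝ≥0∞) = ((N : ℝ≥0∞))⁻¹ := by
          rw [nnnorm_inv, Real.nnnorm_natCast,
            ENNReal.coe_inv (Nat.cast_ne_zero.mpr hN.ne')]
          simp
        rw [h1, ← mul_assoc, ENNReal.inv_mul_cancel (by exact_mod_cast hN.ne')
          (ENNReal.natCast_ne_top N), one_mul]

lemma clamp_abs (a M : ℝ) (hM : 0 ≤ M) : |a - max (min a M) (-M)| ≤ |a| := by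
  rcases le_total 0 a with h | h
  · rw [max_eq_left (le_min (by linarith) (by linarith))]
    rcases le_total a M with h2 | h2
    · rw [min_eq_left h2]; simp [abs_nonneg]
    · rw [min_eq_right h2, abs_of_nonneg (by linarith : (0:ℝ) ≤ a - M), abs_of_nonneg h]
      linarith
  · rw [min_eq_left (by linarith : a ≤ M)]
    rcases le_total (-M) a with h2 | h2
    · rw [max_eq_left h2]; simp [abs_nonneg]
    · rw [max_eq_right h2, abs_of_nonpos h, abs_of_nonpos (by linarith : a - -M ≤ 0)]
      linarith

lemma trunc_tendsto {g : Z → ℝ} (hgm : Measurable g) (hgi : Integrable g ν) :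
    Tendsto (fun M : ℕ => eLpNorm (fun x => g x - max (min (g x) M) (-(M : ℝ))) 1 ν)
      atTop (𝓝 0) := by
  simp only [eLpNorm_one_eq_lintegral_enorm]
  have h0 : (0 : ℝ≥0∞) = ∫⁻ _, 0 ∂ν := by simp
  rw [h0]
  refine tendsto_lintegral_of_dominated_convergence (fun x => (‖g x‖₊ : ℝ≥0∞)) ?_ ?_ ?_ ?_
  · intro M
    exact ((hgm.sub ((hgm.min measurable_const).max measurable_const)).nnnorm).coe_nnreal_ennreal
  · intro M
    refine Filter.Eventually.of_forall fun x => ?_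
    dsimp only
    rw [← enorm_eq_nnnorm, ← ofReal_norm, ← ofReal_norm]
    exact ENNReal.ofReal_le_ofReal (by
      rw [Real.norm_eq_abs, Real.norm_eq_abs]
      exact clamp_abs _ _ (Nat.cast_nonneg M))
  · exact hgi.2.ne
  · refine Filter.Eventually.of_forall fun x => ?_
    refine tendsto_nhds_of_eventually_eq ?_
    filter_upwards [eventually_ge_atTop ⌈|g x|⌉₊] with M hM
    have habs : |g x| ≤ (M : ℝ) := le_trans (Nat.le_ceil _) (by exact_mod_cast hM)
    rw [abs_le] at habs
    rw [min_eq_left habs.2, max_eq_left habs.1]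
    simp

lemma l1_mean_ergodic (hT : Ergodic T ν) {g : Z → ℝ} (hgm : Measurable g)
    (hgi : Integrable g ν) :
    Tendsto (fun N : ℕ => eLpNorm
      (fun x => (N : ℝ)⁻¹ * ∑ t ∈ Finset.range N, g (T^[t] x) - ∫ y, g y ∂ν) 1 ν)
      atTop (𝓝 0) := by
  rw [ENNReal.tendsto_nhds_zero]
  intro ε hε
  have hε2 : (0 : ℝ≥0∞) < ε / 2 := ENNReal.half_pos hε.ne'
  have hε4 : (0 : ℝ≥0∞) < ε / 2 / 2 := ENNReal.half_pos hε2.ne'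
  obtain ⟨M, hM⟩ := (ENNReal.tendsto_nhds_zero.mp (trunc_tendsto hgm hgi) _ hε4).exists
  set h : Z → ℝ := fun x => max (min (g x) M) (-(M : ℝ)) with hh
  set φ : Z → ℝ := fun x => g x - h x with hφ
  have hhm : Measurable h := (hgm.min measurable_const).max measurable_const
  have hφm : Measurable φ := hgm.sub hhm
  have hhb : ∀ x, ‖h x‖ ≤ (M : ℝ) := by
    intro x
    rw [Real.norm_eq_abs, abs_le]
    constructor
    · exact le_max_right _ _
    · exact max_le (min_le_right _ _) (by simp [Nat.cast_nonneg])
  have hh2 : MemLp h 2 ν :=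
    (memLp_top_of_bound hhm.aestronglyMeasurable _
      (Filter.Eventually.of_forall hhb)).mono_exponent le_top
  have hhi : Integrable h ν := memLp_one_iff_integrable.mp (hh2.mono_exponent one_le_two)
  have hφi : Integrable φ ν := hgi.sub hhi
  have htwo := tendsto_eLpNorm_two_ergodic hT hh2
  have hev := ENNReal.tendsto_nhds_zero.mp htwo _ hε2
  filter_upwards [hev] with N hN
  -- decomposition
  have hdecomp : (fun x => (N : ℝ)⁻¹ * ∑ t ∈ Finset.range N, g (T^[t] x) - ∫ y, g y ∂ν)
      = (fun x => ((N : ℝ)⁻¹ * ∑ t ∈ Finset.range N, h (T^[t] x) - ∫ y, h y ∂ν)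
          + (((N : ℝ)⁻¹ * ∑ t ∈ Finset.range N, φ (T^[t] x)) + (- ∫ y, φ y ∂ν))) := by
    funext x
    have hsplit : ∑ t ∈ Finset.range N, g (T^[t] x)
        = ∑ t ∈ Finset.range N, h (T^[t] x) + ∑ t ∈ Finset.range N, φ (T^[t] x) := by
      rw [← Finset.sum_add_distrib]
      exact Finset.sum_congr rfl fun t _ => by simp [hφ]
    have hintsplit : ∫ y, g y ∂ν = (∫ y, h y ∂ν) + ∫ y, φ y ∂ν := by
      rw [← integral_add hhi hφi]
      exact integral_congr_ae (Filter.Eventually.of_forall fun y => by simp [hφ])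
    rw [hsplit, hintsplit]; ring
  rw [hdecomp]
  have hsm1 : AEStronglyMeasurable
      (fun x => (N : ℝ)⁻¹ * ∑ t ∈ Finset.range N, h (T^[t] x) - ∫ y, h y ∂ν) ν := by
    refine (Measurable.aestronglyMeasurable ?_)
    exact ((Finset.measurable_sum _ fun t _ =>
      hhm.comp (hT.toMeasurePreserving.iterate t).measurable).const_mul _).sub measurable_const
  have hsm2 : AEStronglyMeasurable
      (fun x => (N : ℝ)⁻¹ * ∑ t ∈ Finset.range N, φ (T^[t] x)) ν := by
    refine (Measurable.aestronglyMeasurable ?_)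
    exact (Finset.measurable_sum _ fun t _ =>
      hφm.comp (hT.toMeasurePreserving.iterate t).measurable).const_mul _
  calc eLpNorm _ 1 ν
      ≤ eLpNorm (fun x => (N : ℝ)⁻¹ * ∑ t ∈ Finset.range N, h (T^[t] x) - ∫ y, h y ∂ν) 1 ν
        + eLpNorm (fun x => ((N : ℝ)⁻¹ * ∑ t ∈ Finset.range N, φ (T^[t] x))
            + (- ∫ y, φ y ∂ν)) 1 ν :=
        eLpNorm_add_le hsm1 (hsm2.add aestronglyMeasurable_const) le_rfl
    _ ≤ eLpNorm (fun x => (N : ℝ)⁻¹ * ∑ t ∈ Finset.range N, h (T^[t] x) - ∫ y, h y ∂ν) 1 ν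
        + (eLpNorm (fun x => (N : ℝ)⁻¹ * ∑ t ∈ Finset.range N, φ (T^[t] x)) 1 ν
          + eLpNorm (fun _ : Z => - ∫ y, φ y ∂ν) 1 ν) := by
        gcongr
        exact eLpNorm_add_le hsm2 aestronglyMeasurable_const le_rfl
    _ ≤ ε / 2 + (ε / 2 / 2 + ε / 2 / 2) := by
        gcongr
        · calc eLpNorm (fun x => (N : ℝ)⁻¹ * ∑ t ∈ Finset.range N, h (T^[t] x) - ∫ y, h y ∂ν) 1 ν
              ≤ eLpNorm (fun x => (N : ℝ)⁻¹ * ∑ t ∈ Finset.range N, h (T^[t] x) - ∫ y, h y ∂ν) 2 ν :=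
                eLpNorm_le_eLpNorm_of_exponent_le one_le_two (hsm1)
            _ ≤ ε / 2 := hN
        · exact le_trans (eLpNorm_avg_le hT.toMeasurePreserving hφm N) hM
        · rw [eLpNorm_const _ one_ne_zero (IsProbabilityMeasure.ne_zero ν)]
          simp only [ENNReal.toReal_one, one_div, inv_one, ENNReal.rpow_one, measure_univ,
            mul_one]
          rw [enorm_neg]
          calc (‖∫ y, φ y ∂ν‖₊ : ℝ≥0∞) ≤ ∫⁻ y, ‖φ y‖₊ ∂ν := enorm_integral_le_lintegral_enorm _
            _ = eLpNorm φ 1 ν := (eLpNorm_one_eq_lintegral_enorm (f := φ)).symm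
            _ ≤ ε / 2 / 2 := hM
    _ = ε := by rw [ENNReal.add_halves, ENNReal.add_halves]

lemma l1_mean_ergodic_Icc (hT : Ergodic T ν) {g : Z → ℝ} (hgm : Measurable g)
    (hgi : Integrable g ν) :
    Tendsto (fun N : ℕ => eLpNorm
      (fun x => (N : ℝ)⁻¹ * ∑ t ∈ Finset.Icc 1 N, g (T^[t] x) - ∫ y, g y ∂ν) 1 ν)
      atTop (𝓝 0) := by
  have hTm : Measurable T := hT.toMeasurePreserving.measurable
  have hgTm : Measurable (g ∘ T) := hgm.comp hTm
  have hgTi : Integrable (g ∘ T) ν := by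
    have h1 := integrable_map_measure (μ := ν) (f := T) (g := g)
      (by rw [hT.toMeasurePreserving.map_eq]; exact hgm.aestronglyMeasurable) hTm.aemeasurable
    rw [hT.toMeasurePreserving.map_eq] at h1
    exact h1.mp hgi
  have hint : ∫ y, (g ∘ T) y ∂ν = ∫ y, g y ∂ν := by
    rw [show (∫ y, (g ∘ T) y ∂ν) = ∫ y, g (T y) ∂ν from rfl,
      ← integral_map hTm.aemeasurable
        (by rw [hT.toMeasurePreserving.map_eq]; exact hgm.aestronglyMeasurable),
      hT.toMeasurePreserving.map_eq]
  have := l1_mean_ergodic hT hgTm hgTi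
  rw [hint] at this
  refine this.congr fun N => ?_
  congr 1
  funext x
  congr 1
  congr 1
  rw [sum_Icc_one]
  exact Finset.sum_congr rfl fun t _ => by
    rw [Function.comp_apply, ← Function.iterate_succ_apply' T t x]

end L1

section Apply

variable {Ω : Type*} [MeasurableSpace Ω] {μ : Measure Ω} [IsProbabilityMeasure μ]

/-- Averaged `eLpNorm` bound: `‖n⁻¹ ∑_{i ∈ s} f_i‖₁ ≤ c` if each `‖f_i‖₁ ≤ c` and `|s| ≤ n`. -/
lemma eLpNorm_inv_mul_sum_le (n : ℕ) (hn : 1 ≤ n) {ι : Type*} (s : Finset ι) (f : ι → Ω → ℝ)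
    (hmeas : ∀ i ∈ s, AEStronglyMeasurable (f i) μ) {c : ℝ≥0∞}
    (hc : ∀ i ∈ s, eLpNorm (f i) 1 μ ≤ c) (hcard : s.card ≤ n) :
    eLpNorm (fun ω => (n : ℝ)⁻¹ * ∑ i ∈ s, f i ω) 1 μ ≤ c := by
  have hfun : (fun ω => (n : ℝ)⁻¹ * ∑ i ∈ s, f i ω)
      = (n : ℝ)⁻¹ • (∑ i ∈ s, f i) := by
    funext ω; simp [Finset.sum_apply]
  rw [hfun, eLpNorm_const_smul]
  have hN0 : (n : ℝ≥0∞) ≠ 0 := by exact_mod_cast hn.trans_lt' Nat.zero_lt_one |>.ne'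
  have h1 : (‖(n : ℝ)⁻¹‖₊ : ℝ≥0∞) = ((n : ℝ≥0∞))⁻¹ := by
    rw [nnnorm_inv, Real.nnnorm_natCast,
      ENNReal.coe_inv (Nat.cast_ne_zero.mpr (Nat.one_le_iff_ne_zero.mp hn))]
    simp
  calc (‖(n : ℝ)⁻¹‖₊ : ℝ≥0∞) • eLpNorm (∑ i ∈ s, f i) 1 μ
      ≤ (‖(n : ℝ)⁻¹‖₊ : ℝ≥0∞) * ∑ i ∈ s, eLpNorm (f i) 1 μ := by
        rw [smul_eq_mul]; exact mul_le_mul_right (eLpNorm_sum_le hmeas le_rfl) _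
    _ ≤ (‖(n : ℝ)⁻¹‖₊ : ℝ≥0∞) * (s.card • c) := by
        exact mul_le_mul_right (Finset.sum_le_card_nsmul s _ c hc) _
    _ ≤ (‖(n : ℝ)⁻¹‖₊ : ℝ≥0∞) * (n * c) := by
        refine mul_le_mul_right ?_ _
        rw [nsmul_eq_mul]
        exact mul_le_mul_left (by exact_mod_cast hcard) c
    _ = c := by
        rw [h1, ← mul_assoc, ENNReal.inv_mul_cancel hN0 (ENNReal.natCast_ne_top n), one_mul]

lemma block_lln (Xt : ℝ → ℤ → Ω → ℝ) (hXtmeas : ∀ u t, Measurable (Xt u t))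
    (u : ℝ) (hstat : Ergodic shiftZ (Measure.map (fun ω t => Xt u t ω) μ))
    (hint : Integrable (Xt u 0) μ) :
    Tendsto (fun N : ℕ => eLpNorm
      (fun ω => (N : ℝ)⁻¹ * ∑ t ∈ Finset.Icc 1 N, Xt u (t : ℤ) ω - ∫ ω', Xt u 0 ω' ∂μ) 1 μ)
      atTop (𝓝 0) := by
  have hΦm : Measurable (fun ω (t : ℤ) => Xt u t ω) :=
    measurable_pi_lambda _ fun t => hXtmeas u t
  set Φ : Ω → (ℤ → ℝ) := fun ω t => Xt u t ω with hΦ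
  set ν : Measure (ℤ → ℝ) := Measure.map Φ μ with hν
  haveI : IsProbabilityMeasure ν := Measure.isProbabilityMeasure_map hΦm.aemeasurable
  set g : (ℤ → ℝ) → ℝ := fun x => x 0 with hg
  have hgm : Measurable g := measurable_pi_apply 0
  have hgi : Integrable g ν := by
    refine (integrable_map_measure hgm.aestronglyMeasurable hΦm.aemeasurable).mpr ?_
    exact hint
  have hgint : ∫ y, g y ∂ν = ∫ ω', Xt u 0 ω' ∂μ := by
    rw [hν, integral_map hΦm.aemeasurable hgm.aestronglyMeasurable]
  have h := l1_mean_ergodic_Icc hstat hgm hgi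
  rw [hgint] at h
  refine h.congr fun N => ?_
  have hFm : Measurable (fun x : ℤ → ℝ =>
      (N : ℝ)⁻¹ * ∑ t ∈ Finset.Icc 1 N, g (shiftZ^[t] x) - ∫ ω', Xt u 0 ω' ∂μ) := by
    refine Measurable.sub ?_ measurable_const
    exact (Finset.measurable_sum _ fun t _ =>
      hgm.comp (measurable_shiftZ.iterate t)).const_mul _
  rw [hν, eLpNorm_map_measure hFm.aestronglyMeasurable hΦm.aemeasurable]
  congr 1
  funext ω
  simp only [Function.comp_apply]
  congr 2
  refine Finset.sum_congr rfl fun t _ => ?_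
  show (shiftZ^[t] (Φ ω)) 0 = Xt u (t : ℤ) ω
  rw [shiftZ_iterate t (Φ ω) 0, zero_add]

end Apply

section Analytic

variable {Ω : Type*} [MeasurableSpace Ω] {μ : Measure Ω} [IsProbabilityMeasure μ]

lemma m_holder (Xt : ℝ → ℤ → Ω → ℝ) {CB α : ℝ} (hCB : 0 < CB) (hα : 0 < α)
    (hint : ∀ u ∈ Icc (0:ℝ) 1, Integrable (Xt u 0) μ)
    (hhoelder : ∀ u ∈ Icc (0:ℝ) 1, ∀ v ∈ Icc (0:ℝ) 1, ∀ t : ℤ,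
      eLpNorm (fun ω => Xt u t ω - Xt v t ω) 1 μ ≤ ENNReal.ofReal (CB * |u - v| ^ α)) :
    ∀ u ∈ Icc (0:ℝ) 1, ∀ v ∈ Icc (0:ℝ) 1,
      |(∫ ω, Xt u 0 ω ∂μ) - ∫ ω, Xt v 0 ω ∂μ| ≤ CB * |u - v| ^ α := by
  intro u hu v hv
  have hsub := (hint u hu).sub (hint v hv)
  rw [← integral_sub (hint u hu) (hint v hv)]
  have hnn : (0:ℝ) ≤ CB * |u - v| ^ α :=
    mul_nonneg hCB.le (Real.rpow_nonneg (abs_nonneg _) _)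
  calc |∫ ω, (Xt u 0 ω - Xt v 0 ω) ∂μ| ≤ ∫ ω, |Xt u 0 ω - Xt v 0 ω| ∂μ := by
        simpa [Real.norm_eq_abs] using
          norm_integral_le_integral_norm (μ := μ) (fun ω => Xt u 0 ω - Xt v 0 ω)
    _ = (eLpNorm (fun ω => Xt u 0 ω - Xt v 0 ω) 1 μ).toReal := by
        rw [eLpNorm_one_eq_lintegral_enorm,
          ← integral_norm_eq_lintegral_enorm
            (f := fun ω => Xt u 0 ω - Xt v 0 ω) ((hint u hu).1.sub (hint v hv).1)]
        simp [Real.norm_eq_abs]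
    _ ≤ CB * |u - v| ^ α := ENNReal.toReal_le_of_le_ofReal hnn (hhoelder u hu v hv 0)

lemma holder_continuousOn {m : ℝ → ℝ} {CB α : ℝ} (hCB : 0 < CB) (hα : 0 < α)
    (hhold : ∀ u ∈ Icc (0:ℝ) 1, ∀ v ∈ Icc (0:ℝ) 1, |m u - m v| ≤ CB * |u - v| ^ α) :
    ContinuousOn m (Icc (0:ℝ) 1) := by
  have h : HolderOnWith (Real.toNNReal CB) (Real.toNNReal α) m (Icc (0:ℝ) 1) := by
    intro x hx y hy
    rw [edist_dist, edist_dist, Real.dist_eq, Real.dist_eq]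
    rw [Real.coe_toNNReal α hα.le]
    calc ENNReal.ofReal |m x - m y| ≤ ENNReal.ofReal (CB * |x - y| ^ α) :=
          ENNReal.ofReal_le_ofReal (hhold x hx y hy)
      _ = ENNReal.ofReal CB * ENNReal.ofReal (|x - y| ^ α) := by
          rw [ENNReal.ofReal_mul hCB.le]
      _ = (Real.toNNReal CB : ℝ≥0∞) * ENNReal.ofReal |x - y| ^ α := by
          rw [← ENNReal.ofReal_rpow_of_nonneg (abs_nonneg _) hα.le]
          rfl
  exact h.continuousOn (Real.toNNReal_pos.mpr hα)

lemma riemann_bound {m : ℝ → ℝ} {CB α : ℝ} (hCB : 0 < CB) (hα : 0 < α)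
    (hhold : ∀ u ∈ Icc (0:ℝ) 1, ∀ v ∈ Icc (0:ℝ) 1, |m u - m v| ≤ CB * |u - v| ^ α)
    (n : ℕ) (hn : 1 ≤ n) :
    |(∫ u in Icc (0:ℝ) 1, m u)
      - (n : ℝ)⁻¹ * ∑ t ∈ Finset.Icc 1 n, m ((t : ℝ) / (n : ℝ))| ≤ CB * (n : ℝ) ^ (-α) := by
  have hcont := holder_continuousOn hCB hα hhold
  have hn' : (0:ℝ) < n := by exact_mod_cast hn
  have hrn : (0:ℝ) ≤ CB * (n:ℝ) ^ (-α) := mul_nonneg hCB.le (Real.rpow_nonneg hn'.le _)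
  have hmemIcc : ∀ t : ℕ, t ≤ n → ((t : ℝ) / n) ∈ Icc (0:ℝ) 1 := fun t ht =>
    ⟨by positivity, by rw [div_le_one hn']; exact_mod_cast ht⟩
  have hsubIcc : ∀ t : ℕ, t < n → Icc ((t:ℝ)/n) (((t:ℝ)+1)/n) ⊆ Icc (0:ℝ) 1 := by
    intro t ht
    apply Icc_subset_Icc
    · positivity
    · rw [div_le_one hn']
      have : ((t:ℝ) + 1) = ((t+1 : ℕ) : ℝ) := by push_cast; ring
      rw [this]; exact_mod_cast ht
  have hab : ∀ t : ℕ, ((t:ℝ)/n) ≤ ((t:ℝ)+1)/n := fun t => by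
    apply (div_le_div_iff_of_pos_right hn').mpr; linarith
  have hinv : ((n:ℝ)⁻¹) ^ α = (n : ℝ) ^ (-α) := by
    rw [Real.inv_rpow hn'.le, ← Real.rpow_neg hn'.le]
  set a : ℕ → ℝ := fun t => (t:ℝ)/n with ha
  have hacast : ∀ t : ℕ, a (t+1) = ((t:ℝ)+1)/n := fun t => by simp [ha]
  have haa : ∀ t : ℕ, a t ≤ a (t+1) := fun t => by rw [hacast t]; exact hab t
  have hIint : ∀ t : ℕ, t < n → IntervalIntegrable m volume (a t) (a (t+1)) := by
    intro t ht
    refine ContinuousOn.intervalIntegrable ?_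
    refine hcont.mono ?_
    rw [uIcc_of_le (haa t), hacast t]
    exact hsubIcc t ht
  have hsum : ∑ t ∈ Finset.range n, ∫ u in a t..a (t+1), m u = ∫ u in (a 0)..(a n), m u :=
    intervalIntegral.sum_integral_adjacent_intervals hIint
  have ha0 : a 0 = 0 := by simp [ha]
  have han : a n = 1 := by simp [ha, div_self hn'.ne']
  have hIone : (∫ u in Icc (0:ℝ) 1, m u) = ∫ u in (a 0)..(a n), m u := by
    rw [ha0, han, intervalIntegral.integral_of_le zero_le_one, integral_Icc_eq_integral_Ioc]
  have hpiece : ∀ t : ℕ, t < n →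
      |(∫ u in a t..a (t+1), m u) - (n:ℝ)⁻¹ * m (a (t+1))| ≤ CB * (n:ℝ)^(-α) * (n:ℝ)⁻¹ := by
    intro t ht
    have hconst : (n:ℝ)⁻¹ * m (a (t+1)) = ∫ _ in a t..a (t+1), m (a (t+1)) := by
      rw [intervalIntegral.integral_const, smul_eq_mul]
      congr 1
      rw [hacast t, ha]
      field_simp
      ring
    rw [hconst, ← intervalIntegral.integral_sub (hIint t ht) intervalIntegrable_const]
    have hmem1 : a (t+1) ∈ Icc (0:ℝ) 1 := hmemIcc (t+1) ht
    have hbound : ∀ x ∈ Set.uIoc (a t) (a (t+1)),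
        ‖m x - m (a (t+1))‖ ≤ CB * (n:ℝ)^(-α) := by
      intro x hx
      rw [Set.uIoc_of_le (haa t)] at hx
      have hx1 : x ∈ Icc (0:ℝ) 1 := by
        refine (hsubIcc t ht) ?_
        rw [← hacast t]
        exact ⟨hx.1.le, hx.2⟩
      have hdiffa : a (t+1) - a t = (n:ℝ)⁻¹ := by
        rw [hacast t]
        show ((t:ℝ)+1)/n - (t:ℝ)/n = (n:ℝ)⁻¹
        field_simp
        ring
      have hxc : |x - a (t+1)| ≤ (n:ℝ)⁻¹ := by
        have hpos : (0:ℝ) < (n:ℝ)⁻¹ := by positivity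
        rw [abs_le]
        exact ⟨by linarith [hx.1], by linarith [hx.2]⟩
      calc ‖m x - m (a (t+1))‖ = |m x - m (a (t+1))| := Real.norm_eq_abs _
        _ ≤ CB * |x - a (t+1)| ^ α := hhold x hx1 (a (t+1)) hmem1
        _ ≤ CB * ((n:ℝ)⁻¹) ^ α := by
            exact mul_le_mul_of_nonneg_left
              (Real.rpow_le_rpow (abs_nonneg _) hxc hα.le) hCB.le
        _ = CB * (n:ℝ)^(-α) := by rw [hinv]
    have hnorm := intervalIntegral.norm_integral_le_of_norm_le_const hbound
    have hdiffa : a (t+1) - a t = (n:ℝ)⁻¹ := by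
      rw [hacast t]
      show ((t:ℝ)+1)/n - (t:ℝ)/n = (n:ℝ)⁻¹
      field_simp
      ring
    have habs : |a (t+1) - a t| = (n:ℝ)⁻¹ := by
      rw [hdiffa, abs_of_nonneg (by positivity)]
    rw [Real.norm_eq_abs, habs] at hnorm
    exact hnorm
  have hre : (n : ℝ)⁻¹ * ∑ t ∈ Finset.Icc 1 n, m ((t : ℝ) / (n : ℝ))
      = ∑ t ∈ Finset.range n, (n:ℝ)⁻¹ * m (a (t+1)) := by
    rw [Finset.mul_sum, sum_Icc_one (fun t => (n:ℝ)⁻¹ * m ((t : ℝ) / (n:ℝ)))]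
  rw [hre, hIone, ← hsum, ← Finset.sum_sub_distrib]
  calc |∑ t ∈ Finset.range n, ((∫ u in a t..a (t+1), m u) - (n:ℝ)⁻¹ * m (a (t+1)))|
      ≤ ∑ t ∈ Finset.range n, |(∫ u in a t..a (t+1), m u) - (n:ℝ)⁻¹ * m (a (t+1))| :=
        Finset.abs_sum_le_sum_abs _ _
    _ ≤ ∑ _t ∈ Finset.range n, CB * (n:ℝ)^(-α) * (n:ℝ)⁻¹ :=
        Finset.sum_le_sum fun t ht => hpiece t (Finset.mem_range.mp ht)
    _ = CB * (n:ℝ)^(-α) := by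
        rw [Finset.sum_const, Finset.card_range, nsmul_eq_mul]
        field_simp


end Analytic

/-- **Global law of large numbers** (Theorem 2.6(i)): under Assumption (S1) with `q = 1`
and `0 < α ≤ 1`, `(1/n) ∑_{t=1}^n X_{t,n} → ∫_0^1 E X̃_0(u) du` in `L¹`. -/
theorem lln_global {Ω : Type*} [MeasurableSpace Ω] (μ : Measure Ω) [IsProbabilityMeasure μ]
    (X : ℕ → ℕ → Ω → ℝ) (Xt : ℝ → ℤ → Ω → ℝ)
    (hXmeas : ∀ n t, Measurable (X n t))
    (hXtmeas : ∀ u t, Measurable (Xt u t))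
    (hstat : ∀ u ∈ Icc (0:ℝ) 1, StatErg μ (fun t => Xt u t))
    (α : ℝ) (hα : 0 < α) (hα1 : α ≤ 1) (CB : ℝ) (hCB : 0 < CB)
    -- (S1), with q = 1 :
    (hmom : ∃ M : ℝ, ∀ u ∈ Icc (0:ℝ) 1, eLpNorm (Xt u 0) 1 μ ≤ ENNReal.ofReal M)
    (hhoelder : ∀ u ∈ Icc (0:ℝ) 1, ∀ v ∈ Icc (0:ℝ) 1, ∀ t : ℤ,
      eLpNorm (fun ω => Xt u t ω - Xt v t ω) 1 μ ≤ ENNReal.ofReal (CB * |u - v| ^ α))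
    (happrox : ∀ n : ℕ, 1 ≤ n → ∀ t : ℕ, 1 ≤ t → t ≤ n →
      eLpNorm (fun ω => X n t ω - Xt ((t : ℝ) / (n : ℝ)) (t : ℤ) ω) 1 μ
        ≤ ENNReal.ofReal (CB * (n : ℝ) ^ (-α))) :
    Tendsto (fun n : ℕ =>
        eLpNorm (fun ω => (n : ℝ)⁻¹ * ∑ t ∈ Finset.Icc 1 n, X n t ω
          - ∫ u in Icc (0:ℝ) 1, (∫ ω', Xt u 0 ω' ∂μ)) 1 μ)
      atTop (nhds 0) := by

  have hstatE : ∀ u ∈ Icc (0:ℝ) 1, Ergodic shiftZ (Measure.map (fun ω t => Xt u t ω) μ) :=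
    fun u hu => hstat u hu
  classical
  obtain ⟨M, hmom⟩ := hmom
  set I : ℝ := ∫ u in Icc (0:ℝ) 1, (∫ ω', Xt u 0 ω' ∂μ) with hIdef
  set m : ℝ → ℝ := fun u => ∫ ω', Xt u 0 ω' ∂μ with hm
  have hIm : I = ∫ u in Icc (0:ℝ) 1, m u := rfl
  have hint : ∀ u ∈ Icc (0:ℝ) 1, Integrable (Xt u 0) μ := fun u hu =>
    memLp_one_iff_integrable.mp ⟨(hXtmeas u 0).aestronglyMeasurable,
      lt_of_le_of_lt (hmom u hu) ENNReal.ofReal_lt_top⟩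
  have hmH : ∀ u ∈ Icc (0:ℝ) 1, ∀ v ∈ Icc (0:ℝ) 1, |m u - m v| ≤ CB * |u - v| ^ α :=
    m_holder Xt hCB hα hint hhoelder
  set E : ℝ → ℕ → ℝ≥0∞ := fun u N => eLpNorm
    (fun ω => (N : ℝ)⁻¹ * ∑ t ∈ Finset.Icc 1 N, (Xt u (t : ℤ) ω - m u)) 1 μ with hE
  have hmeasF : ∀ (u : ℝ) (c : ℝ) (s : Finset ℕ),
      Measurable (fun ω => c * ∑ t ∈ s, (Xt u (t:ℤ) ω - m u)) := fun u c s =>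
    (Finset.measurable_sum s fun t _ => (hXtmeas u t).sub measurable_const).const_mul c
  have hE0 : ∀ u, E u 0 = 0 := by intro u; simp [hE]
  have hIcc1 : ∀ b : ℕ, Finset.Icc 1 b = Finset.Ioc 0 b := fun b => Finset.Icc_add_one_left_eq_Ioc 0 b
  have hEtend : ∀ u ∈ Icc (0:ℝ) 1, Tendsto (E u) atTop (𝓝 0) := by
    intro u hu
    have h := block_lln Xt hXtmeas u (hstatE u hu) (hint u hu)
    refine Tendsto.congr' ?_ h
    filter_upwards [eventually_ge_atTop 1] with N hN
    have hNne : ((N : ℕ) : ℝ) ≠ 0 := Nat.cast_ne_zero.mpr (Nat.one_le_iff_ne_zero.mp hN)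
    simp only [hE]
    congr 1
    funext ω
    rw [Finset.sum_sub_distrib, Finset.sum_const, Nat.card_Icc, Nat.add_sub_cancel,
      nsmul_eq_mul, mul_sub, ← mul_assoc, inv_mul_cancel₀ hNne, one_mul]
  have hblock : ∀ u ∈ Icc (0:ℝ) 1, ∀ a b n : ℕ, a ≤ b → b ≤ n →
      eLpNorm (fun ω => (n : ℝ)⁻¹ * ∑ t ∈ Finset.Ioc a b, (Xt u (t : ℤ) ω - m u)) 1 μ
        ≤ E u a + E u b := by
    intro u hu a b n hab hbn
    have hIoc : ∀ ω, ∑ t ∈ Finset.Ioc a b, (Xt u (t:ℤ) ω - m u)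
        = ∑ t ∈ Finset.Icc 1 b, (Xt u (t:ℤ) ω - m u)
          - ∑ t ∈ Finset.Icc 1 a, (Xt u (t:ℤ) ω - m u) := by
      intro ω
      rw [hIcc1, hIcc1, eq_sub_iff_add_eq']
      exact Finset.sum_Ioc_consecutive _ (Nat.zero_le a) hab
    have hfn : (fun ω => (n:ℝ)⁻¹ * ∑ t ∈ Finset.Ioc a b, (Xt u (t:ℤ) ω - m u))
        = (fun ω => ((n:ℝ)⁻¹ * ∑ t ∈ Finset.Icc 1 b, (Xt u (t:ℤ) ω - m u))
            - ((n:ℝ)⁻¹ * ∑ t ∈ Finset.Icc 1 a, (Xt u (t:ℤ) ω - m u))) := by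
      funext ω; rw [hIoc ω]; ring
    rw [hfn]
    have hone : ∀ c : ℕ, c ≤ n →
        eLpNorm (fun ω => (n:ℝ)⁻¹ * ∑ t ∈ Finset.Icc 1 c, (Xt u (t:ℤ) ω - m u)) 1 μ
          ≤ E u c := by
      intro c hcn
      refine eLpNorm_mono fun ω => ?_
      rcases Nat.eq_zero_or_pos c with rfl | hc
      · simp
      · have hcpos : (0:ℝ) < c := by exact_mod_cast hc
        have hnpos : (0:ℝ) < n := lt_of_lt_of_le hcpos (by exact_mod_cast hcn)
        rw [Real.norm_eq_abs, Real.norm_eq_abs, abs_mul, abs_mul]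
        refine mul_le_mul_of_nonneg_right ?_ (abs_nonneg _)
        rw [abs_inv, abs_inv, abs_of_nonneg hnpos.le, abs_of_nonneg hcpos.le]
        exact inv_anti₀ hcpos (by exact_mod_cast hcn)
    refine le_trans (eLpNorm_sub_le (hmeasF u _ _).aestronglyMeasurable
      (hmeasF u _ _).aestronglyMeasurable le_rfl) ?_
    exact le_trans (add_le_add (hone b hbn) (hone a (hab.trans hbn))) (add_comm _ _).le
  -- start of the ε-argument
  rw [ENNReal.tendsto_nhds_zero]
  intro ε hε
  have hε2 : (0 : ℝ≥0∞) < ε / 2 := ENNReal.half_pos hε.ne'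
  have hofk : Tendsto (fun k : ℕ => ENNReal.ofReal (2 * CB * (k:ℝ) ^ (-α))) atTop (𝓝 0) := by
    have h1 : Tendsto (fun k : ℕ => ((k:ℝ)) ^ (-α)) atTop (𝓝 0) :=
      (tendsto_rpow_neg_atTop hα).comp tendsto_natCast_atTop_atTop
    have h2 : Tendsto (fun k : ℕ => 2 * CB * (k:ℝ) ^ (-α)) atTop (𝓝 0) := by
      simpa using h1.const_mul (2 * CB)
    simpa using ENNReal.tendsto_ofReal h2
  obtain ⟨k, hk1, hkle⟩ : ∃ k : ℕ, 1 ≤ k ∧ ENNReal.ofReal (2 * CB * (k:ℝ) ^ (-α)) ≤ ε / 2 := by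
    obtain ⟨k, h1, h2⟩ :=
      ((ENNReal.tendsto_nhds_zero.mp hofk (ε/2) hε2).and (eventually_ge_atTop 1)).exists
    exact ⟨k, h2, h1⟩
  have hkpos : 0 < k := hk1
  have hkR : (0:ℝ) < k := by exact_mod_cast hkpos
  set A : ℕ → ℕ → ℕ := fun j n => n * j / k with hA
  set U : ℕ → ℝ := fun j => ((j:ℝ) + 1) / k with hU
  have hUmem : ∀ j : ℕ, j < k → U j ∈ Icc (0:ℝ) 1 := by
    intro j hj
    constructor
    · positivity
    · rw [div_le_one hkR]
      have : ((j:ℝ) + 1) = ((j + 1 : ℕ) : ℝ) := by push_cast; ring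
      rw [this]
      exact_mod_cast Nat.succ_le_of_lt hj
  have hAmono : ∀ n : ℕ, Monotone (fun j => A j n) := fun n j j' hjj =>
    Nat.div_le_div_right (Nat.mul_le_mul_left n hjj)
  have hA0 : ∀ n, A 0 n = 0 := fun n => by simp [hA]
  have hAk : ∀ n, A k n = n := fun n => by simp [hA, Nat.mul_div_cancel _ hkpos]
  have hAle : ∀ j n, j ≤ k → A j n ≤ n := fun j n hj =>
    le_trans (hAmono n hj) (le_of_eq (hAk n))
  have hmemt : ∀ j, j < k → ∀ n, 1 ≤ n → ∀ t ∈ Finset.Ioc (A j n) (A (j+1) n),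
      (1 ≤ t ∧ t ≤ n) ∧ ((t:ℝ)/n ∈ Icc (0:ℝ) 1 ∧ |(t:ℝ)/n - U j| ≤ (k:ℝ)⁻¹) := by
    intro j hj n hn t ht
    rw [Finset.mem_Ioc] at ht
    have hnR : (0:ℝ) < n := by exact_mod_cast hn
    have ht1 : 1 ≤ t := by omega
    have htn : t ≤ n := le_trans ht.2 (hAle (j+1) n hj)
    have hub : (t:ℝ)/n ≤ U j := by
      have h1 : t * k ≤ n * (j+1) := (Nat.le_div_iff_mul_le hkpos).mp ht.2
      rw [hU, div_le_div_iff₀ hnR hkR]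
      calc (t:ℝ) * k ≤ (n:ℝ) * ((j:ℝ)+1) := by exact_mod_cast h1
        _ = ((j:ℝ)+1) * n := by ring
    have hlb : ((j:ℝ))/k < (t:ℝ)/n := by
      have h1 : n * j < t * k := (Nat.div_lt_iff_lt_mul hkpos).mp ht.1
      rw [div_lt_div_iff₀ hkR hnR]
      calc (j:ℝ) * n = (n:ℝ) * j := by ring
        _ < (t:ℝ) * k := by exact_mod_cast h1
    refine ⟨⟨ht1, htn⟩, ⟨⟨by positivity, le_trans hub (hUmem j hj).2⟩, ?_⟩⟩
    rw [abs_le]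
    have hUj : U j - (k:ℝ)⁻¹ = (j:ℝ)/k := by rw [hU]; field_simp; ring
    have hki : (0:ℝ) ≤ (k:ℝ)⁻¹ := by positivity
    exact ⟨by linarith, by linarith⟩
  have hinvk : ((k:ℝ)⁻¹) ^ α = (k:ℝ) ^ (-α) := by
    rw [Real.inv_rpow (le_of_lt hkR), ← Real.rpow_neg (le_of_lt hkR)]
  have hdiffb : ∀ j, j < k → ∀ n, 1 ≤ n → ∀ t ∈ Finset.Ioc (A j n) (A (j+1) n),
      eLpNorm (fun ω => (Xt ((t:ℝ)/(n:ℝ)) (t:ℤ) ω - m ((t:ℝ)/(n:ℝ)))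
        - (Xt (U j) (t:ℤ) ω - m (U j))) 1 μ
        ≤ ENNReal.ofReal (2 * CB * (k:ℝ) ^ (-α)) := by
    intro j hj n hn t ht
    obtain ⟨⟨ht1, htn⟩, hmemI, hdist⟩ := hmemt j hj n hn t ht
    have hUj := hUmem j hj
    have hCk : (0:ℝ) ≤ CB * (k:ℝ)^(-α) := mul_nonneg hCB.le (Real.rpow_nonneg hkR.le _)
    have hfun : (fun ω => (Xt ((t:ℝ)/(n:ℝ)) (t:ℤ) ω - m ((t:ℝ)/(n:ℝ)))
          - (Xt (U j) (t:ℤ) ω - m (U j)))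
        = (fun ω => Xt ((t:ℝ)/(n:ℝ)) (t:ℤ) ω - Xt (U j) (t:ℤ) ω)
          + (fun _ => m (U j) - m ((t:ℝ)/(n:ℝ))) := by
      funext ω; simp only [Pi.add_apply]; ring
    rw [hfun]
    have hrle : ∀ x y : ℝ, |x - y| ≤ (k:ℝ)⁻¹ →
        CB * |x - y| ^ α ≤ CB * (k:ℝ)^(-α) := fun x y hxy => by
      rw [← hinvk]
      exact mul_le_mul_of_nonneg_left (Real.rpow_le_rpow (abs_nonneg _) hxy hα.le) hCB.le
    calc eLpNorm _ 1 μ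
        ≤ eLpNorm (fun ω => Xt ((t:ℝ)/(n:ℝ)) (t:ℤ) ω - Xt (U j) (t:ℤ) ω) 1 μ
          + eLpNorm (fun _ : Ω => m (U j) - m ((t:ℝ)/(n:ℝ))) 1 μ :=
          eLpNorm_add_le ((hXtmeas _ _).sub (hXtmeas _ _)).aestronglyMeasurable
            aestronglyMeasurable_const le_rfl
      _ ≤ ENNReal.ofReal (CB * (k:ℝ)^(-α)) + ENNReal.ofReal (CB * (k:ℝ)^(-α)) := by
          refine add_le_add ?_ ?_
          · exact le_trans (hhoelder _ hmemI _ hUj (t:ℤ))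
              (ENNReal.ofReal_le_ofReal (hrle _ _ hdist))
          · rw [eLpNorm_const _ one_ne_zero (IsProbabilityMeasure.ne_zero μ)]
            simp only [ENNReal.toReal_one, one_div, inv_one, ENNReal.rpow_one, measure_univ,
              mul_one]
            rw [← ofReal_norm, Real.norm_eq_abs]
            refine ENNReal.ofReal_le_ofReal ?_
            refine le_trans (hmH _ hUj _ hmemI) (hrle _ _ ?_)
            rw [abs_sub_comm]; exact hdist
      _ = ENNReal.ofReal (2 * CB * (k:ℝ)^(-α)) := by
          rw [← ENNReal.ofReal_add hCk hCk]; ring_nf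
  -- remainder terms
  set S : ℕ → ℝ≥0∞ := fun n =>
    ∑ j ∈ Finset.range k, (E (U j) (A j n) + E (U j) (A (j+1) n)) with hS
  have hAtop : ∀ j : ℕ, 1 ≤ j → Tendsto (fun n => A j n) atTop atTop := by
    intro j hj
    rw [tendsto_atTop]
    intro C
    filter_upwards [eventually_ge_atTop (C * k)] with n hn
    simp only [hA]
    refine (Nat.le_div_iff_mul_le hkpos).mpr ?_
    calc C * k ≤ n := hn
      _ ≤ n * j := Nat.le_mul_of_pos_right n hj
  have hEA : ∀ j, j < k → ∀ i : ℕ, Tendsto (fun n => E (U j) (A i n)) atTop (𝓝 0) := by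
    intro j hj i
    rcases Nat.eq_zero_or_pos i with rfl | hi
    · simp only [hA0, hE0]
      exact tendsto_const_nhds
    · exact (hEtend (U j) (hUmem j hj)).comp (hAtop i hi)
  have hStend : Tendsto S atTop (𝓝 0) := by
    have h := tendsto_finset_sum (Finset.range k)
      (fun j (hj : j ∈ Finset.range k) =>
        ((hEA j (Finset.mem_range.mp hj) j).add (hEA j (Finset.mem_range.mp hj) (j+1))))
    simpa using h
  have hofn : Tendsto (fun n : ℕ => ENNReal.ofReal (CB * (n:ℝ) ^ (-α))) atTop (𝓝 0) := by
    have h1 : Tendsto (fun n : ℕ => ((n:ℝ)) ^ (-α)) atTop (𝓝 0) :=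
      (tendsto_rpow_neg_atTop hα).comp tendsto_natCast_atTop_atTop
    have h2 : Tendsto (fun n : ℕ => CB * (n:ℝ) ^ (-α)) atTop (𝓝 0) := by
      simpa using h1.const_mul CB
    simpa using ENNReal.tendsto_ofReal h2
  have hRtend : Tendsto (fun n : ℕ =>
      ENNReal.ofReal (CB * (n:ℝ) ^ (-α)) + ENNReal.ofReal (CB * (n:ℝ) ^ (-α)) + S n)
      atTop (𝓝 0) := by
    have := (hofn.add hofn).add hStend
    simpa using this
  filter_upwards [ENNReal.tendsto_nhds_zero.mp hRtend _ hε2, eventually_ge_atTop 1]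
    with n hRn hn1
  have hnR : (0:ℝ) < n := by exact_mod_cast hn1
  have hb1 : ∀ (F : ℕ → ℝ),
      ∑ j ∈ Finset.range k, ∑ t ∈ Finset.Ioc (A j n) (A (j+1) n), F t
        = ∑ t ∈ Finset.Icc 1 n, F t := by
    intro F
    have h := sum_blocks F (fun j => A j n) (hAmono n) k
    simp only [hA0 n, hAk n] at h
    rw [hIcc1]
    exact h
  set σk := (Finset.range k).sigma (fun j => Finset.Ioc (A j n) (A (j+1) n)) with hσk
  set F1 : Ω → ℝ := fun ω =>
    (n:ℝ)⁻¹ * ∑ t ∈ Finset.Icc 1 n, (X n t ω - Xt ((t:ℝ)/(n:ℝ)) (t:ℤ) ω) with hF1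
  set F2 : Ω → ℝ := fun ω =>
    (n:ℝ)⁻¹ * ∑ p ∈ σk, ((Xt ((p.2:ℝ)/(n:ℝ)) (p.2:ℤ) ω - m ((p.2:ℝ)/(n:ℝ)))
      - (Xt (U p.1) (p.2:ℤ) ω - m (U p.1))) with hF2
  set F3 : Ω → ℝ := fun ω =>
    (n:ℝ)⁻¹ * ∑ j ∈ Finset.range k, ∑ t ∈ Finset.Ioc (A j n) (A (j+1) n),
      (Xt (U j) (t:ℤ) ω - m (U j)) with hF3
  set C4 : ℝ := (n:ℝ)⁻¹ * ∑ t ∈ Finset.Icc 1 n, m ((t:ℝ)/(n:ℝ)) - I with hC4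
  have hdecomp : (fun ω => (n:ℝ)⁻¹ * ∑ t ∈ Finset.Icc 1 n, X n t ω - I)
      = fun ω => F1 ω + F2 ω + F3 ω + C4 := by
    rw [hF1, hF2, hF3, hC4]
    funext ω
    simp only [hσk, Finset.sum_sigma]
    have hs1 : ∑ t ∈ Finset.Icc 1 n, (X n t ω - Xt ((t:ℝ)/(n:ℝ)) (t:ℤ) ω)
        = ∑ t ∈ Finset.Icc 1 n, X n t ω
          - ∑ t ∈ Finset.Icc 1 n, Xt ((t:ℝ)/(n:ℝ)) (t:ℤ) ω := Finset.sum_sub_distrib ..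
    have hs2 : ∑ t ∈ Finset.Icc 1 n, (Xt ((t:ℝ)/(n:ℝ)) (t:ℤ) ω - m ((t:ℝ)/(n:ℝ)))
        = ∑ t ∈ Finset.Icc 1 n, Xt ((t:ℝ)/(n:ℝ)) (t:ℤ) ω
          - ∑ t ∈ Finset.Icc 1 n, m ((t:ℝ)/(n:ℝ)) := Finset.sum_sub_distrib ..
    have hmid : (∑ j ∈ Finset.range k, ∑ t ∈ Finset.Ioc (A j n) (A (j+1) n),
          ((Xt ((t:ℝ)/(n:ℝ)) (t:ℤ) ω - m ((t:ℝ)/(n:ℝ))) - (Xt (U j) (t:ℤ) ω - m (U j))))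
        + (∑ j ∈ Finset.range k, ∑ t ∈ Finset.Ioc (A j n) (A (j+1) n),
          (Xt (U j) (t:ℤ) ω - m (U j)))
        = ∑ t ∈ Finset.Icc 1 n, (Xt ((t:ℝ)/(n:ℝ)) (t:ℤ) ω - m ((t:ℝ)/(n:ℝ))) := by
      rw [← Finset.sum_add_distrib]
      refine Eq.trans (Finset.sum_congr rfl fun j _ => ?_) (hb1 _)
      rw [← Finset.sum_add_distrib]
      exact Finset.sum_congr rfl fun t _ => by ring
    linear_combination (-(n:ℝ)⁻¹) * hs1 - (n:ℝ)⁻¹ * hmid - (n:ℝ)⁻¹ * hs2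
  have hmF1 : Measurable F1 := by
    rw [hF1]
    exact (Finset.measurable_sum _ fun t _ => (hXmeas n t).sub (hXtmeas _ _)).const_mul _
  have hmF2 : Measurable F2 := by
    rw [hF2]
    exact (Finset.measurable_sum _ fun p _ =>
      ((hXtmeas _ _).sub measurable_const).sub
        ((hXtmeas _ _).sub measurable_const)).const_mul _
  have hmF3 : Measurable F3 := by
    rw [hF3]
    exact (Finset.measurable_sum _ fun j _ => Finset.measurable_sum _ fun t _ =>
      (hXtmeas _ _).sub measurable_const).const_mul _
  have hE1 : eLpNorm F1 1 μ ≤ ENNReal.ofReal (CB * (n:ℝ)^(-α)) := by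
    rw [hF1]
    refine eLpNorm_inv_mul_sum_le n hn1 _ _ ?_ ?_ ?_
    · intro t _; exact ((hXmeas n t).sub (hXtmeas _ _)).aestronglyMeasurable
    · intro t ht
      rw [Finset.mem_Icc] at ht
      exact happrox n hn1 t ht.1 ht.2
    · rw [Nat.card_Icc]; omega
  have hE2 : eLpNorm F2 1 μ ≤ ENNReal.ofReal (2 * CB * (k:ℝ)^(-α)) := by
    rw [hF2]
    refine eLpNorm_inv_mul_sum_le n hn1 _ _ ?_ ?_ ?_
    · intro p _
      exact (((hXtmeas _ _).sub measurable_const).sub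
        ((hXtmeas _ _).sub measurable_const)).aestronglyMeasurable
    · intro p hp
      rw [hσk, Finset.mem_sigma] at hp
      exact hdiffb p.1 (Finset.mem_range.mp hp.1) n hn1 p.2 hp.2
    · rw [hσk, Finset.card_sigma]
      refine le_of_eq ?_
      rw [Finset.sum_congr rfl fun j (_ : j ∈ Finset.range k) => Nat.card_Ioc (A j n) (A (j+1) n)]
      rw [Finset.sum_range_tsub (f := fun j => A j n) (fun j j' h => hAmono n h)]
      rw [hA0 n, hAk n]
      omega
  have hE3 : eLpNorm F3 1 μ ≤ S n := by
    have hf3 : F3 = ∑ j ∈ Finset.range k, (fun ω =>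
        (n:ℝ)⁻¹ * ∑ t ∈ Finset.Ioc (A j n) (A (j+1) n), (Xt (U j) (t:ℤ) ω - m (U j))) := by
      rw [hF3]
      funext ω
      rw [Finset.sum_apply, Finset.mul_sum]
    rw [hf3]
    refine le_trans (eLpNorm_sum_le
      (fun j _ => (hmeasF (U j) _ _).aestronglyMeasurable) le_rfl) ?_
    rw [hS]
    refine Finset.sum_le_sum fun j hj => ?_
    exact hblock (U j) (hUmem j (Finset.mem_range.mp hj)) (A j n) (A (j+1) n) n
      (hAmono n (Nat.le_succ j)) (hAle (j+1) n (Nat.succ_le_of_lt (Finset.mem_range.mp hj)))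
  have hE4 : eLpNorm (fun _ : Ω => C4) 1 μ ≤ ENNReal.ofReal (CB * (n:ℝ)^(-α)) := by
    rw [eLpNorm_const _ one_ne_zero (IsProbabilityMeasure.ne_zero μ)]
    simp only [ENNReal.toReal_one, one_div, inv_one, ENNReal.rpow_one, measure_univ, mul_one]
    rw [← ofReal_norm, Real.norm_eq_abs]
    refine ENNReal.ofReal_le_ofReal ?_
    rw [hC4, abs_sub_comm, hIm]
    exact riemann_bound hCB hα hmH n hn1
  rw [hdecomp]
  calc eLpNorm (fun ω => F1 ω + F2 ω + F3 ω + C4) 1 μ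
      ≤ eLpNorm (fun ω => F1 ω + F2 ω + F3 ω) 1 μ + eLpNorm (fun _ : Ω => C4) 1 μ :=
        eLpNorm_add_le ((hmF1.add hmF2).add hmF3).aestronglyMeasurable
          aestronglyMeasurable_const le_rfl
    _ ≤ (eLpNorm (fun ω => F1 ω + F2 ω) 1 μ + eLpNorm F3 1 μ)
        + eLpNorm (fun _ : Ω => C4) 1 μ := by
        gcongr
        exact eLpNorm_add_le (hmF1.add hmF2).aestronglyMeasurable
          hmF3.aestronglyMeasurable le_rfl
    _ ≤ ((eLpNorm F1 1 μ + eLpNorm F2 1 μ) + eLpNorm F3 1 μ)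
        + eLpNorm (fun _ : Ω => C4) 1 μ := by
        gcongr
        exact eLpNorm_add_le hmF1.aestronglyMeasurable hmF2.aestronglyMeasurable le_rfl
    _ ≤ ((ENNReal.ofReal (CB * (n:ℝ)^(-α)) + ENNReal.ofReal (2 * CB * (k:ℝ)^(-α))) + S n)
        + ENNReal.ofReal (CB * (n:ℝ)^(-α)) :=
        add_le_add (add_le_add (add_le_add hE1 hE2) hE3) hE4
    _ = (ENNReal.ofReal (CB * (n:ℝ)^(-α)) + ENNReal.ofReal (CB * (n:ℝ)^(-α)) + S n)
        + ENNReal.ofReal (2 * CB * (k:ℝ)^(-α)) := by ring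
    _ ≤ ε / 2 + ε / 2 := add_le_add hRn hkle
    _ = ε := ENNReal.add_halves ε
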